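/- arXiv:1002.1833 — 3 statements merged into one kernel-verified Lean document; each statement's English description precedes it below -/
import Mathlib

section
/- Compositionality of HOCRWL semantics: for any HOCRWL-program P, any partial expression e and any context C, the HOCRWL-denotation of C[e] equals the union, over all partial patterns t in the HOCRWL-denotation of e, of the HOCRWL-denotations of C[t]; i.e. ⟦C[e]⟧ = ⋃_{t ∈ ⟦e⟧} ⟦C[t]⟧. -/
/-- A signature: function symbols and constructor symbols, each with an arity. -/
structure Sig where
  FS : Type
  CS : Type
  arityF : FS → ℕ
  arityC : CS → ℕ

/-- Applicative partial expressions over a signature.  Variables are natural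
numbers and `bot` is the distinguished 0-ary constructor `⊥`. -/
inductive Exp (σ : Sig) : Type where
  | var : ℕ → Exp σ
  | fn : σ.FS → Exp σ
  | cn : σ.CS → Exp σ
  | bot : Exp σ
  | app : Exp σ → Exp σ → Exp σ

variable {σ : Sig}

/-- `applyList e [e1, …, en]` is the curried application `e e1 … en`. -/
def applyList (e : Exp σ) (es : List (Exp σ)) : Exp σ := es.foldl Exp.app e

/-- Partial patterns `Pat_⊥`. -/
inductive IsPPat : Exp σ → Prop where
  | var (x : ℕ) : IsPPat (Exp.var x)
  | bot : IsPPat (Exp.bot : Exp σ)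
  | capp (c : σ.CS) (ts : List (Exp σ)) (har : ts.length ≤ σ.arityC c)
      (hts : ∀ t ∈ ts, IsPPat t) : IsPPat (applyList (Exp.cn c) ts)
  | fapp (f : σ.FS) (ts : List (Exp σ)) (har : ts.length < σ.arityF f)
      (hts : ∀ t ∈ ts, IsPPat t) : IsPPat (applyList (Exp.fn f) ts)

/-- The constructor `⊥` does not occur in the expression. -/
def BotFree : Exp σ → Prop
  | .bot => False
  | .app a b => BotFree a ∧ BotFree b
  | _ => True

/-- Total patterns `Pat`. -/
def IsPat (t : Exp σ) : Prop := IsPPat t ∧ BotFree t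

/-- First-order patterns `FOPat`. -/
inductive IsFOPat : Exp σ → Prop where
  | var (x : ℕ) : IsFOPat (Exp.var x)
  | capp (c : σ.CS) (ts : List (Exp σ)) (har : ts.length = σ.arityC c)
      (hts : ∀ t ∈ ts, IsFOPat t) : IsFOPat (applyList (Exp.cn c) ts)

/-- The list of occurrences of variables in an expression. -/
def occVars : Exp σ → List ℕ
  | .var x => [x]
  | .app a b => occVars a ++ occVars b
  | _ => []

/-- Applying a substitution to an expression. -/
def subst (θ : ℕ → Exp σ) : Exp σ → Exp σ
  | .var x => θ x
  | .fn f => .fn f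
  | .cn c => .cn c
  | .bot => .bot
  | .app a b => .app (subst θ a) (subst θ b)

/-- Partial-pattern substitutions `PSubst_⊥`. -/
def PSub (θ : ℕ → Exp σ) : Prop := ∀ x, IsPPat (θ x)

/-- A program rule `f t1 … tn → r` (the left-hand side is `f` applied to `lhs`). -/
structure Rule (σ : Sig) where
  fn : σ.FS
  lhs : List (Exp σ)
  rhs : Exp σ

/-- Well-formedness of a rule: `f` is applied to as many arguments as its arity,
the arguments form a linear tuple of total patterns. -/
def Rule.WF (r : Rule σ) : Prop :=
  r.lhs.length = σ.arityF r.fn ∧ (∀ t ∈ r.lhs, IsPat t) ∧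
    (r.lhs.flatMap occVars).Nodup

/-- The rule has no extra variables: all variables of the right-hand side occur
in the left-hand side. -/
def Rule.NoExtra (r : Rule σ) : Prop :=
  ∀ x ∈ occVars r.rhs, x ∈ r.lhs.flatMap occVars

abbrev Program (σ : Sig) := Set (Rule σ)

/-- A program without extra variables, all whose rules are well formed. -/
def WFProg (P : Program σ) : Prop := ∀ r ∈ P, r.WF ∧ r.NoExtra

/-- `h ∈ Σ` (a function symbol, a constructor symbol, or `⊥`). -/
def IsSymb : Exp σ → Prop
  | .fn _ => True
  | .cn _ => True
  | .bot => True
  | _ => False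

/-- HOCRWL derivation trees for statements `e ⇒ t`, with rules
(B), (RR), (DC) and (OR). -/
inductive DTree (P : Program σ) : Exp σ → Exp σ → Type where
  | bot (e : Exp σ) : DTree P e Exp.bot
  | rr (x : ℕ) : DTree P (Exp.var x) (Exp.var x)
  | dc (h : Exp σ) (es ts : List (Exp σ)) (hsym : IsSymb h)
      (hlen : es.length = ts.length) (hpat : IsPPat (applyList h ts))
      (ds : ∀ p ∈ es.zip ts, DTree P p.1 p.2) :
      DTree P (applyList h es) (applyList h ts)
  | opr (r : Rule σ) (hr : r ∈ P) (θ : ℕ → Exp σ) (hθ : PSub θ)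
      (es as : List (Exp σ)) (t : Exp σ) (hlen : es.length = r.lhs.length)
      (ds : ∀ p ∈ es.zip (r.lhs.map (subst θ)), DTree P p.1 p.2)
      (d : DTree P (applyList (subst θ r.rhs) as) t) :
      DTree P (applyList (Exp.fn r.fn) (es ++ as)) t

/-- `P ⊢ e ⇒ t` is derivable in the HOCRWL proof calculus. -/
def Deriv (P : Program σ) (e t : Exp σ) : Prop := Nonempty (DTree P e t)

/-- The HOCRWL denotation `⟦e⟧^P = { t ∈ Pat_⊥ | P ⊢ e ⇒ t }`. -/
def den (P : Program σ) (e : Exp σ) : Set (Exp σ) := {t | IsPPat t ∧ Deriv P e t}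

/-- Observations: total patterns in the denotation. -/
def Obs (P : Program σ) (e : Exp σ) : Set (Exp σ) := {t | t ∈ den P e ∧ BotFree t}

/-- First-order observations: first-order patterns in the denotation. -/
def ObsFO (P : Program σ) (e : Exp σ) : Set (Exp σ) := {t | t ∈ den P e ∧ IsFOPat t}

/-- Contexts `C ::= [ ] | C e | e C`. -/
inductive Cntxt (σ : Sig) : Type where
  | hole : Cntxt σ
  | appL : Cntxt σ → Exp σ → Cntxt σ
  | appR : Exp σ → Cntxt σ → Cntxt σ

/-- Filling the hole of a context with an expression. -/
def Cntxt.fill : Cntxt σ → Exp σ → Exp σ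
  | .hole, e => e
  | .appL C e', e => .app (C.fill e) e'
  | .appR e' C, e => .app e' (C.fill e)

/-- Function symbols occurring in an expression. -/
def expFS : Exp σ → Set σ.FS
  | .fn f => {f}
  | .app a b => expFS a ∪ expFS b
  | _ => ∅

/-- Function symbols occurring in a rule. -/
def ruleFS (r : Rule σ) : Set σ.FS :=
  insert r.fn ((⋃ t ∈ r.lhs, expFS t) ∪ expFS r.rhs)

/-- Function symbols occurring in a program. -/
def progFS (P : Program σ) : Set σ.FS := ⋃ r ∈ P, ruleFS r

/-- Function symbols defined by a program (roots of left-hand sides). -/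
def defs (P : Program σ) : Set σ.FS := Rule.fn '' P

/-- `P'` is a safe extension of `(P, e)`: `P' = P ⊎ P''` where `P''` defines no
function symbol occurring in `P` or in `e`. -/
def SafeExt (P P' : Program σ) (e : Exp σ) : Prop :=
  ∃ P'' : Program σ, P' = P ∪ P'' ∧ Disjoint P P'' ∧
    Disjoint (defs P'') (expFS e ∪ progFS P)

/-- `e ∼ₙ e'` : `n`-extensional equivalence. -/
def ExtEquiv (P : Program σ) (n : ℕ) (e e' : Exp σ) : Prop :=
  ∀ es : List (Exp σ), es.length = n →
    den P (applyList e es) = den P (applyList e' es)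

/-! ### Auxiliary material for the compositionality theorem -/

section CompositionalityAux

variable {P : Program σ}

theorem applyList_append (e : Exp σ) (l₁ l₂ : List (Exp σ)) :
    applyList e (l₁ ++ l₂) = applyList (applyList e l₁) l₂ :=
  List.foldl_append

theorem applyList_concat (e : Exp σ) (l : List (Exp σ)) (a : Exp σ) :
    applyList e (l ++ [a]) = Exp.app (applyList e l) a := by
  rw [applyList_append]; rfl

theorem applyList_cons (e a : Exp σ) (l : List (Exp σ)) :
    applyList e (a :: l) = applyList (Exp.app e a) l := rfl

/-- The head of an application spine. -/
def headOf : Exp σ → Exp σ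
  | .app a _ => headOf a
  | e => e

/-- The arguments of an application spine. -/
def argsOf : Exp σ → List (Exp σ)
  | .app a b => argsOf a ++ [b]
  | _ => []

/-- Not an application. -/
def NApp : Exp σ → Prop
  | .app _ _ => False
  | _ => True

theorem IsSymb.nApp {h : Exp σ} (hs : IsSymb h) : NApp h := by
  cases h <;> trivial

theorem headOf_applyList (l : List (Exp σ)) (e : Exp σ) :
    headOf (applyList e l) = headOf e := by
  induction l generalizing e with
  | nil => rfl
  | cons a l ih => rw [applyList_cons, ih]; rfl

theorem argsOf_applyList (l : List (Exp σ)) (e : Exp σ) :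
    argsOf (applyList e l) = argsOf e ++ l := by
  induction l generalizing e with
  | nil => simp [applyList, argsOf]
  | cons a l ih =>
    rw [applyList_cons, ih]
    show argsOf e ++ [a] ++ l = _
    simp

theorem headOf_nApp {e : Exp σ} (h : NApp e) : headOf e = e := by
  cases e <;> first | rfl | exact h.elim

theorem argsOf_nApp {e : Exp σ} (h : NApp e) : argsOf e = [] := by
  cases e <;> first | rfl | exact h.elim

theorem nApp_headOf (e : Exp σ) : NApp (headOf e) := by
  induction e <;> trivial

theorem applyList_headOf_argsOf (e : Exp σ) :
    applyList (headOf e) (argsOf e) = e := by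
  induction e with
  | app a b iha ihb =>
    show applyList (headOf a) (argsOf a ++ [b]) = _
    rw [applyList_concat, iha]
  | _ => rfl

theorem spine_inj {h₁ h₂ : Exp σ} (n₁ : NApp h₁) (n₂ : NApp h₂) {l₁ l₂ : List (Exp σ)}
    (heq : applyList h₁ l₁ = applyList h₂ l₂) : h₁ = h₂ ∧ l₁ = l₂ := by
  have hh := congrArg headOf heq
  rw [headOf_applyList, headOf_applyList, headOf_nApp n₁, headOf_nApp n₂] at hh
  have ha := congrArg argsOf heq
  rw [argsOf_applyList, argsOf_applyList, argsOf_nApp n₁, argsOf_nApp n₂] at ha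
  simp only [List.nil_append] at ha
  exact ⟨hh, ha⟩

theorem applyList_eq_app {h : Exp σ} (hn : NApp h) {es : List (Exp σ)} {u a : Exp σ}
    (heq : applyList h es = Exp.app u a) : ∃ es₀, es = es₀ ++ [a] ∧ u = applyList h es₀ := by
  have hu : Exp.app u a = applyList (headOf u) (argsOf u ++ [a]) := by
    rw [applyList_concat, applyList_headOf_argsOf]
  obtain ⟨h1, h2⟩ := spine_inj hn (nApp_headOf u) (heq.trans hu)
  exact ⟨argsOf u, h2, by rw [h1, applyList_headOf_argsOf]⟩

/-! #### Partial pattern lemmas -/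

theorem spine_inj' {h₁ h₂ : Exp σ} {l₁ l₂ : List (Exp σ)}
    (heq : applyList h₁ l₁ = applyList h₂ l₂) (n₁ : NApp h₁) (n₂ : NApp h₂) :
    h₁ = h₂ ∧ l₁ = l₂ := spine_inj n₁ n₂ heq

theorem IsPPat.cases' {t : Exp σ} (ht : IsPPat t) :
    (∃ x, t = Exp.var x) ∨ t = Exp.bot ∨
    (∃ c ts, t = applyList (Exp.cn c) ts ∧ ts.length ≤ σ.arityC c ∧ ∀ u ∈ ts, IsPPat u) ∨
    (∃ f ts, t = applyList (Exp.fn f) ts ∧ ts.length < σ.arityF f ∧ ∀ u ∈ ts, IsPPat u) := by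
  cases ht with
  | var x => exact .inl ⟨x, rfl⟩
  | bot => exact .inr (.inl rfl)
  | capp c ts h1 h2 => exact .inr (.inr (.inl ⟨c, ts, rfl, h1, h2⟩))
  | fapp f ts h1 h2 => exact .inr (.inr (.inr ⟨f, ts, rfl, h1, h2⟩))

theorem ppat_fn_inv {f : σ.FS} {ts : List (Exp σ)} (hp : IsPPat (applyList (Exp.fn f) ts)) :
    ts.length < σ.arityF f ∧ ∀ u ∈ ts, IsPPat u := by
  rcases hp.cases' with ⟨x, hx⟩ | hb | ⟨c, ts', he, hl, hts⟩ | ⟨g, ts', he, hl, hts⟩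
  · exact absurd (spine_inj' (l₂ := []) hx trivial trivial).1 (by simp)
  · exact absurd (spine_inj' (l₂ := []) hb trivial trivial).1 (by simp)
  · exact absurd (spine_inj' he trivial trivial).1 (by simp)
  · obtain ⟨h1, h2⟩ := spine_inj' he trivial trivial
    cases h1; cases h2; exact ⟨hl, hts⟩

theorem ppat_cn_inv {c : σ.CS} {ts : List (Exp σ)} (hp : IsPPat (applyList (Exp.cn c) ts)) :
    ts.length ≤ σ.arityC c ∧ ∀ u ∈ ts, IsPPat u := by
  rcases hp.cases' with ⟨x, hx⟩ | hb | ⟨c', ts', he, hl, hts⟩ | ⟨g, ts', he, hl, hts⟩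
  · exact absurd (spine_inj' (l₂ := []) hx trivial trivial).1 (by simp)
  · exact absurd (spine_inj' (l₂ := []) hb trivial trivial).1 (by simp)
  · obtain ⟨h1, h2⟩ := spine_inj' he trivial trivial
    cases h1; cases h2; exact ⟨hl, hts⟩
  · exact absurd (spine_inj' he trivial trivial).1 (by simp)

theorem ppat_bot_inv {ts : List (Exp σ)} (hp : IsPPat (applyList (Exp.bot : Exp σ) ts)) :
    ts = [] := by
  rcases hp.cases' with ⟨x, hx⟩ | hb | ⟨c', ts', he, hl, hts⟩ | ⟨g, ts', he, hl, hts⟩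
  · exact absurd (spine_inj' (l₂ := []) hx trivial trivial).1 (by simp)
  · exact (spine_inj' (l₂ := []) hb trivial trivial).2
  · exact absurd (spine_inj' he trivial trivial).1 (by simp)
  · exact absurd (spine_inj' he trivial trivial).1 (by simp)

theorem ppat_args {h : Exp σ} (hs : IsSymb h) {ts : List (Exp σ)}
    (hp : IsPPat (applyList h ts)) : ∀ u ∈ ts, IsPPat u := by
  cases h with
  | fn f => exact (ppat_fn_inv hp).2
  | cn c => exact (ppat_cn_inv hp).2
  | bot => rw [ppat_bot_inv hp]; simp
  | var x => exact hs.elim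
  | app a b => exact hs.elim

theorem ppat_prefix {h : Exp σ} (hs : IsSymb h) {l₁ l₂ : List (Exp σ)}
    (hp : IsPPat (applyList h (l₁ ++ l₂))) : IsPPat (applyList h l₁) := by
  cases h with
  | fn f =>
    obtain ⟨hl, hts⟩ := ppat_fn_inv hp
    exact .fapp f l₁ (by simp at hl; omega) fun u hu => hts u (by simp [hu])
  | cn c =>
    obtain ⟨hl, hts⟩ := ppat_cn_inv hp
    exact .capp c l₁ (by simp at hl; omega) fun u hu => hts u (by simp [hu])
  | bot =>
    obtain ⟨rfl, -⟩ := List.append_eq_nil_iff.1 (ppat_bot_inv hp)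
    exact .bot
  | var x => exact hs.elim
  | app a b => exact hs.elim

theorem subst_applyList (θ : ℕ → Exp σ) (e : Exp σ) (l : List (Exp σ)) :
    subst θ (applyList e l) = applyList (subst θ e) (l.map (subst θ)) := by
  induction l generalizing e with
  | nil => rfl
  | cons a l ih => rw [applyList_cons, ih]; rfl

theorem IsPPat.substPPat {t : Exp σ} (ht : IsPPat t) {θ : ℕ → Exp σ} (hθ : PSub θ) :
    IsPPat (subst θ t) := by
  induction ht with
  | var x => exact hθ x
  | bot => exact .bot
  | capp c ts h1 h2 ih =>
    rw [show subst θ (applyList (Exp.cn c) ts) = applyList (Exp.cn c) (ts.map (subst θ))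
      from subst_applyList θ _ ts]
    refine .capp c _ (by simpa using h1) fun u hu => ?_
    obtain ⟨v, hv, rfl⟩ := List.mem_map.1 hu
    exact ih v hv
  | fapp f ts h1 h2 ih =>
    rw [show subst θ (applyList (Exp.fn f) ts) = applyList (Exp.fn f) (ts.map (subst θ))
      from subst_applyList θ _ ts]
    refine .fapp f _ (by simpa using h1) fun u hu => ?_
    obtain ⟨v, hv, rfl⟩ := List.mem_map.1 hu
    exact ih v hv

/-! #### List helpers -/

theorem eq_append_of_length {α : Type*} (l : List α) (n m : ℕ) (h : l.length = n + m) :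
    ∃ l₁ l₂, l = l₁ ++ l₂ ∧ l₁.length = n ∧ l₂.length = m :=
  ⟨l.take n, l.drop n, (List.take_append_drop n l).symm,
    by simp [List.length_take]; omega, by simp; omega⟩

theorem eq_concat_of_length {α : Type*} (l : List α) (n : ℕ) (h : l.length = n + 1) :
    ∃ l₀ a, l = l₀ ++ [a] ∧ l₀.length = n := by
  obtain ⟨l₁, l₂, rfl, h1, h2⟩ := eq_append_of_length l n 1 h
  obtain ⟨a, rfl⟩ := List.length_eq_one_iff.1 h2
  exact ⟨l₁, a, rfl, h1⟩

theorem append_inj_of_le {α : Type*} {l₁ l₂ l₃ l₄ : List α} (h : l₁ ++ l₂ = l₃ ++ l₄)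
    (hle : l₃.length ≤ l₁.length) : ∃ m, l₁ = l₃ ++ m ∧ l₄ = m ++ l₂ := by
  rcases List.append_eq_append_iff.1 h with ⟨m, hm1, hm2⟩ | ⟨m, hm1, hm2⟩
  · have hm : m = [] := by
      have := congrArg List.length hm1
      simp at this
      exact List.eq_nil_of_length_eq_zero (by omega)
    subst hm
    exact ⟨[], by simpa using hm1.symm, by simpa using hm2.symm⟩
  · exact ⟨m, hm1, hm2⟩

theorem zip_forall_getElem {α β : Type*} {l₁ : List α} {l₂ : List β} {Q : α × β → Prop} :
    (∀ p ∈ l₁.zip l₂, Q p) ↔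
      ∀ (i : ℕ) (h1 : i < l₁.length) (h2 : i < l₂.length), Q (l₁[i], l₂[i]) := by
  constructor
  · intro H i h1 h2
    have hi : i < (l₁.zip l₂).length := by simp [List.length_zip]; omega
    have := H _ (List.getElem_mem hi)
    rwa [List.getElem_zip] at this
  · intro H p hp
    obtain ⟨i, hi, rfl⟩ := List.getElem_of_mem hp
    rw [List.getElem_zip]
    have hi' := hi
    simp [List.length_zip] at hi'
    exact H i (by omega) (by omega)

theorem zip_forall_append {α β : Type*} {l₁ r₁ : List α} {l₂ r₂ : List β}
    (h : l₁.length = l₂.length) {Q : α × β → Prop} :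
    (∀ p ∈ (l₁ ++ r₁).zip (l₂ ++ r₂), Q p) ↔
      (∀ p ∈ l₁.zip l₂, Q p) ∧ (∀ p ∈ r₁.zip r₂, Q p) := by
  rw [List.zip_append h]
  constructor
  · exact fun H => ⟨fun p hp => H p (List.mem_append_left _ hp),
      fun p hp => H p (List.mem_append_right _ hp)⟩
  · rintro ⟨H1, H2⟩ p hp
    rcases List.mem_append.1 hp with hh | hh
    exacts [H1 p hh, H2 p hh]

/-! #### A `Prop`-valued mirror of `DTree` -/

/-- `Der P e t` is the propositional truncation of `DTree P e t`, defined
inductively. -/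
inductive Der (P : Program σ) : Exp σ → Exp σ → Prop where
  | bot (e : Exp σ) : Der P e Exp.bot
  | rr (x : ℕ) : Der P (Exp.var x) (Exp.var x)
  | dc (h : Exp σ) (es ts : List (Exp σ)) (hsym : IsSymb h)
      (hlen : es.length = ts.length) (hpat : IsPPat (applyList h ts))
      (ds : ∀ p ∈ es.zip ts, Der P p.1 p.2) :
      Der P (applyList h es) (applyList h ts)
  | opr (r : Rule σ) (hr : r ∈ P) (θ : ℕ → Exp σ) (hθ : PSub θ)
      (es as : List (Exp σ)) (t : Exp σ) (hlen : es.length = r.lhs.length)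
      (ds : ∀ p ∈ es.zip (r.lhs.map (subst θ)), Der P p.1 p.2)
      (d : Der P (applyList (subst θ r.rhs) as) t) :
      Der P (applyList (Exp.fn r.fn) (es ++ as)) t

/-- Collapse a derivation tree to a `Der` proof. -/
def DTree.toDer : ∀ {e t : Exp σ}, DTree P e t → Der P e t
  | _, _, .bot e => .bot e
  | _, _, .rr x => .rr x
  | _, _, .dc h es ts hs hl hp ds => .dc h es ts hs hl hp (fun p hp' => (ds p hp').toDer)
  | _, _, .opr r hr θ hθ es as t hl ds d =>
      .opr r hr θ hθ es as t hl (fun p hp' => (ds p hp').toDer) d.toDer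

theorem Der.toDeriv {e t : Exp σ} (d : Der P e t) : Deriv P e t := by
  induction d with
  | bot e => exact ⟨.bot e⟩
  | rr x => exact ⟨.rr x⟩
  | dc h es ts hs hl hp ds ih =>
    exact ⟨.dc h es ts hs hl hp (fun p hp' => Classical.choice (ih p hp'))⟩
  | opr r hr θ hθ es as t hl ds d ih ihd =>
    exact ⟨.opr r hr θ hθ es as t hl (fun p hp' => Classical.choice (ih p hp'))
      (Classical.choice ihd)⟩

theorem deriv_iff {e t : Exp σ} : Deriv P e t ↔ Der P e t :=
  ⟨fun ⟨d⟩ => d.toDer, Der.toDeriv⟩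

/-- Reflexivity of `⇒` on partial patterns. -/
theorem IsPPat.derSelf {t : Exp σ} (ht : IsPPat t) : Der P t t := by
  induction ht with
  | var x => exact .rr x
  | bot => exact .bot _
  | capp c ts h1 h2 ih =>
    exact .dc _ _ _ trivial rfl (.capp c ts h1 h2)
      (zip_forall_getElem.2 fun i hi _ => ih _ (ts.getElem_mem hi))
  | fapp f ts h1 h2 ih =>
    exact .dc _ _ _ trivial rfl (.fapp f ts h1 h2)
      (zip_forall_getElem.2 fun i hi _ => ih _ (ts.getElem_mem hi))

theorem zip_self_refl {l : List (Exp σ)} (hl : ∀ u ∈ l, IsPPat u) :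
    ∀ p ∈ l.zip l, Der P p.1 p.2 :=
  zip_forall_getElem.2 fun i hi _ => (hl _ (l.getElem_mem hi)).derSelf

/-! #### Inversion lemmas for `Der` -/

theorem der_spine_inv {h : Exp σ} (hs : IsSymb h) {l : List (Exp σ)} {s : Exp σ}
    (D : Der P (applyList h l) s) :
    s = Exp.bot ∨
    (∃ ts, s = applyList h ts ∧ l.length = ts.length ∧ IsPPat (applyList h ts) ∧
       ∀ p ∈ l.zip ts, Der P p.1 p.2) ∨
    (∃ (r : Rule σ) (_ : r ∈ P) (θ : ℕ → Exp σ) (_ : PSub θ) (es as : List (Exp σ)),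
       h = Exp.fn r.fn ∧ l = es ++ as ∧ es.length = r.lhs.length ∧
       (∀ p ∈ es.zip (r.lhs.map (subst θ)), Der P p.1 p.2) ∧
       Der P (applyList (subst θ r.rhs) as) s) := by
  generalize hX : applyList h l = X at D
  cases D with
  | bot => exact .inl rfl
  | rr x =>
    obtain ⟨h1, -⟩ := spine_inj' (l₂ := []) hX hs.nApp trivial
    rw [h1] at hs; exact hs.elim
  | dc h' es ts hsym hlen hpat ds =>
    obtain ⟨h1, h2⟩ := spine_inj' hX hs.nApp hsym.nApp
    cases h1; cases h2
    exact .inr (.inl ⟨ts, rfl, hlen, hpat, ds⟩)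
  | opr r hr θ hθ es as t hlen ds d =>
    obtain ⟨h1, h2⟩ := spine_inj' hX hs.nApp trivial
    exact .inr (.inr ⟨r, hr, θ, hθ, es, as, h1, h2, hlen, ds, d⟩)

theorem der_bot_inv {as : List (Exp σ)} {s : Exp σ}
    (D : Der P (applyList (Exp.bot : Exp σ) as) s) : s = Exp.bot := by
  rcases der_spine_inv (h := (Exp.bot : Exp σ)) trivial D with h | ⟨ts, rfl, hlen, hpat, -⟩ | ⟨r, -, -, -, -, -, h, -⟩
  · exact h
  · rw [ppat_bot_inv hpat]; rfl
  · exact absurd h (by simp)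

/-! #### The key transitivity lemma -/

theorem zip_step {es ts ss : List (Exp σ)} (h1 : es.length = ts.length)
    (h2 : ts.length = ss.length) (hts : ∀ u ∈ ts, IsPPat u)
    (ih : ∀ p ∈ es.zip ts, IsPPat p.2 → ∀ w, Der P p.2 w → Der P p.1 w)
    (B : ∀ p ∈ ts.zip ss, Der P p.1 p.2) :
    ∀ p ∈ es.zip ss, Der P p.1 p.2 := by
  refine zip_forall_getElem.2 fun i hi1 hi2 => ?_
  have hit : i < ts.length := by omega
  exact zip_forall_getElem.1 ih i hi1 hit (hts _ (ts.getElem_mem hit)) _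
    (zip_forall_getElem.1 B i hit hi2)

/-- If `e ⇒ t` with `t` a partial pattern, then everything derivable from
`t as` is derivable from `e as`. -/
theorem der_trans (hP : WFProg P) : ∀ {e t : Exp σ}, Der P e t → IsPPat t →
    ∀ (as : List (Exp σ)) (s : Exp σ), Der P (applyList t as) s →
      Der P (applyList e as) s := by
  intro e t D
  induction D with
  | bot e =>
    intro _ as s hD
    rw [der_bot_inv hD]
    exact .bot _
  | rr x => intro _ as s hD; exact hD
  | dc h es ts hsym hlen hpat ds ih =>
    intro _ as s hD
    rw [← applyList_append] at hD ⊢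
    have ih' : ∀ p ∈ es.zip ts, IsPPat p.2 → ∀ w, Der P p.2 w → Der P p.1 w :=
      fun p hp hpp w hw => ih p hp hpp [] w hw
    have hts : ∀ u ∈ ts, IsPPat u := ppat_args hsym hpat
    rcases der_spine_inv hsym hD with rfl | ⟨ss, rfl, hlen2, hpat2, ds2⟩ |
      ⟨r, hr, θ, hθ, es'', as'', hh, hsplit, hlen'', ds'', d''⟩
    · exact .bot _
    · obtain ⟨ss₀, ss₁, rfl, hl0, hl1⟩ := eq_append_of_length ss ts.length as.length
        (by simp at hlen2 ⊢; omega)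
      obtain ⟨B₀, B₁⟩ := (zip_forall_append hl0.symm).1 ds2
      exact .dc h (es ++ as) (ss₀ ++ ss₁) hsym (by simp; omega) hpat2
        ((zip_forall_append (by omega)).2 ⟨zip_step hlen (by omega) hts ih' B₀, B₁⟩)
    · subst hh
      have harr : r.lhs.length = σ.arityF r.fn := ((hP r hr).1).1
      have hlt : ts.length < r.lhs.length := by
        rw [harr]; exact (ppat_fn_inv hpat).1
      obtain ⟨m, hm1, hm2⟩ := append_inj_of_le hsplit.symm (by omega)
      subst hm1; subst hm2
      obtain ⟨M₀, M₁, hM, hM0, hM1⟩ := eq_append_of_length (r.lhs.map (subst θ))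
        ts.length m.length (by simp at hlen'' ⊢; omega)
      rw [hM] at ds''
      obtain ⟨B₀, B₁⟩ := (zip_forall_append hM0.symm).1 ds''
      have hnew : ∀ p ∈ (es ++ m).zip (M₀ ++ M₁), Der P p.1 p.2 :=
        (zip_forall_append (by omega)).2 ⟨zip_step hlen hM0.symm hts ih' B₀, B₁⟩
      rw [← hM] at hnew
      have hfin := Der.opr r hr θ hθ (es ++ m) as'' s (by simp at hlen'' ⊢; omega) hnew d''
      rwa [List.append_assoc] at hfin
  | opr r hr θ hθ es as₀ t hlen ds d ihds ihd =>
    intro hppat as s hD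
    rw [← applyList_append]
    have hmid := ihd hppat as s hD
    rw [← applyList_append] at hmid
    have hfin := Der.opr r hr θ hθ es (as₀ ++ as) s hlen ds hmid
    rwa [← List.append_assoc] at hfin

theorem zip_single_mem {α β : Type*} (a : α) (b : β) : (a, b) ∈ [a].zip [b] := by simp

theorem forall_zip_single {α β : Type*} {a : α} {b : β} {Q : α × β → Prop} (h : Q (a, b)) :
    ∀ p ∈ [a].zip [b], Q p := by
  intro p hp
  simp only [List.zip_cons_cons, List.zip_nil_right, List.mem_singleton] at hp
  rwa [hp]

/-- Replacing an argument by any expression deriving it. -/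
theorem der_arg (hP : WFProg P) {t : Exp σ} (ht : IsPPat t) {u : Exp σ} (hu : Der P u t) :
    ∀ {X s : Exp σ}, Der P X s → ∀ a, X = Exp.app a t → Der P (Exp.app a u) s := by
  intro X s D
  induction D with
  | bot e => intro a _; exact .bot _
  | rr x => intro a h; exact Exp.noConfusion rfl (heq_of_eq h)
  | dc h es ts hsym hlen hpat ds ih =>
    intro a heq
    obtain ⟨es₀, rfl, rfl⟩ := applyList_eq_app hsym.nApp heq
    obtain ⟨ts₀, b, rfl, hl0⟩ := eq_concat_of_length ts es₀.length (by simp at hlen; omega)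
    obtain ⟨B₀, B₁⟩ := (zip_forall_append (by omega)).1 ds
    have hub : Der P u b := der_trans hP hu ht [] b (B₁ (t, b) (zip_single_mem t b))
    rw [← applyList_concat]
    exact .dc h (es₀ ++ [u]) (ts₀ ++ [b]) hsym (by simp; omega) hpat
      ((zip_forall_append (by omega)).2 ⟨B₀, forall_zip_single hub⟩)
  | opr r hr θ hθ es as t' hlen ds d ihds ihd =>
    intro a heq
    rcases List.eq_nil_or_concat as with rfl | ⟨as₀, a'', rfl⟩
    · rw [List.append_nil] at heq
      obtain ⟨es₀, rfl, rfl⟩ := applyList_eq_app (by trivial) heq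
      obtain ⟨lhs₀, q, hq, hl0⟩ := eq_concat_of_length r.lhs es₀.length (by simp at hlen; omega)
      rw [hq, List.map_append] at ds
      obtain ⟨B₀, B₁⟩ := (zip_forall_append (by simp; omega)).1 ds
      have huq : Der P u (subst θ q) :=
        der_trans hP hu ht [] _ (B₁ (t, subst θ q) (zip_single_mem t (subst θ q)))
      have hg : Exp.app (applyList (Exp.fn r.fn) es₀) u
          = applyList (Exp.fn r.fn) ((es₀ ++ [u]) ++ []) := by
        rw [List.append_nil, applyList_concat]
      rw [hg]
      refine .opr r hr θ hθ (es₀ ++ [u]) [] t' (by simp at hlen ⊢; omega) ?_ d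
      rw [hq, List.map_append]
      exact (zip_forall_append (by simp; omega)).2 ⟨B₀, forall_zip_single huq⟩
    · simp only [List.concat_eq_append] at d ihd heq
      rw [show es ++ (as₀ ++ [a'']) = (es ++ as₀) ++ [a''] from (List.append_assoc ..).symm,
        applyList_concat] at heq
      injection heq with h1 h2
      subst h2; subst h1
      have hmid := ihd (applyList (subst θ r.rhs) as₀) (applyList_concat _ _ _)
      rw [← applyList_concat] at hmid
      have hg : Exp.app (applyList (Exp.fn r.fn) (es ++ as₀)) u
          = applyList (Exp.fn r.fn) (es ++ (as₀ ++ [u])) := by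
        rw [← List.append_assoc, applyList_concat]
      rw [hg]
      exact .opr r hr θ hθ es (as₀ ++ [u]) t' hlen ds hmid

/-- Decomposition of a derivation at the function position of an application. -/
theorem der_app_left (hP : WFProg P) :
    ∀ {X s : Exp σ}, Der P X s → ∀ u a, X = Exp.app u a →
      ∃ t, IsPPat t ∧ Der P u t ∧ Der P (Exp.app t a) s := by
  intro X s D
  induction D with
  | bot e => intro u a _; exact ⟨.bot, .bot, .bot _, .bot _⟩
  | rr x => intro u a h; exact Exp.noConfusion rfl (heq_of_eq h)
  | dc h es ts hsym hlen hpat ds ih =>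
    intro u a heq
    obtain ⟨es₀, rfl, rfl⟩ := applyList_eq_app hsym.nApp heq
    obtain ⟨ts₀, b, rfl, hl0⟩ := eq_concat_of_length ts es₀.length (by simp at hlen; omega)
    obtain ⟨B₀, B₁⟩ := (zip_forall_append (by omega)).1 ds
    have hpre : IsPPat (applyList h ts₀) := ppat_prefix hsym hpat
    refine ⟨applyList h ts₀, hpre, .dc h es₀ ts₀ hsym (by omega) hpre B₀, ?_⟩
    rw [← applyList_concat]
    exact .dc h (ts₀ ++ [a]) (ts₀ ++ [b]) hsym (by simp) hpat
      ((zip_forall_append rfl).2 ⟨zip_self_refl (ppat_args hsym hpre),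
        forall_zip_single (B₁ (a, b) (zip_single_mem a b))⟩)
  | opr r hr θ hθ es as t' hlen ds d ihds ihd =>
    intro u a heq
    rcases List.eq_nil_or_concat as with rfl | ⟨as₀, a'', rfl⟩
    · rw [List.append_nil] at heq
      obtain ⟨es₀, rfl, rfl⟩ := applyList_eq_app (by trivial) heq
      obtain ⟨lhs₀, q, hq, hl0⟩ := eq_concat_of_length r.lhs es₀.length (by simp at hlen; omega)
      rw [hq, List.map_append] at ds
      obtain ⟨B₀, B₁⟩ := (zip_forall_append (by simp; omega)).1 ds
      have hlhs : ∀ v ∈ r.lhs, IsPPat v := fun v hv => (((hP r hr).1).2.1 v hv).1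
      have hM : ∀ v ∈ lhs₀.map (subst θ), IsPPat v := by
        intro v hv
        obtain ⟨w, hw, rfl⟩ := List.mem_map.1 hv
        exact (hlhs w (by rw [hq]; simp [hw])).substPPat hθ
      have harr : r.lhs.length = σ.arityF r.fn := ((hP r hr).1).1
      have hpt : IsPPat (applyList (Exp.fn r.fn) (lhs₀.map (subst θ))) := by
        refine .fapp _ _ ?_ hM
        rw [hq] at harr; simp at harr ⊢; omega
      refine ⟨_, hpt, .dc (Exp.fn r.fn) es₀ _ trivial (by simp; omega) hpt B₀, ?_⟩
      rw [← applyList_concat]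
      have hch : ∀ p ∈ (lhs₀.map (subst θ) ++ [a]).zip (r.lhs.map (subst θ)), Der P p.1 p.2 := by
        rw [hq, List.map_append]
        exact (zip_forall_append rfl).2
          ⟨zip_self_refl hM, forall_zip_single (B₁ (a, subst θ q) (zip_single_mem a (subst θ q)))⟩
      have hfin := Der.opr r hr θ hθ (lhs₀.map (subst θ) ++ [a]) [] t'
        (by rw [hq]; simp) hch d
      rwa [List.append_nil] at hfin
    · simp only [List.concat_eq_append] at d ihd heq
      rw [show es ++ (as₀ ++ [a'']) = (es ++ as₀) ++ [a''] from (List.append_assoc ..).symm,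
        applyList_concat] at heq
      injection heq with h1 h2
      subst h2; subst h1
      obtain ⟨t, hpt, hd1, hd2⟩ := ihd (applyList (subst θ r.rhs) as₀) a'' (applyList_concat _ _ _)
      exact ⟨t, hpt, .opr r hr θ hθ es as₀ t hlen ds hd1, hd2⟩

/-- Decomposition of a derivation at the argument position of an application. -/
theorem der_app_right (hP : WFProg P) :
    ∀ {X s : Exp σ}, Der P X s → ∀ a u, X = Exp.app a u →
      ∃ t, IsPPat t ∧ Der P u t ∧ Der P (Exp.app a t) s := by
  intro X s D
  induction D with
  | bot e => intro a u _; exact ⟨.bot, .bot, .bot _, .bot _⟩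
  | rr x => intro a u h; exact Exp.noConfusion rfl (heq_of_eq h)
  | dc h es ts hsym hlen hpat ds ih =>
    intro a u heq
    obtain ⟨es₀, rfl, rfl⟩ := applyList_eq_app hsym.nApp heq
    obtain ⟨ts₀, b, rfl, hl0⟩ := eq_concat_of_length ts es₀.length (by simp at hlen; omega)
    obtain ⟨B₀, B₁⟩ := (zip_forall_append (by omega)).1 ds
    have hb : IsPPat b := ppat_args hsym hpat b (by simp)
    refine ⟨b, hb, B₁ (u, b) (zip_single_mem u b), ?_⟩
    rw [← applyList_concat]
    exact .dc h (es₀ ++ [b]) (ts₀ ++ [b]) hsym (by simp; omega) hpat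
      ((zip_forall_append (by omega)).2 ⟨B₀, forall_zip_single hb.derSelf⟩)
  | opr r hr θ hθ es as t' hlen ds d ihds ihd =>
    intro a u heq
    rcases List.eq_nil_or_concat as with rfl | ⟨as₀, a'', rfl⟩
    · rw [List.append_nil] at heq
      obtain ⟨es₀, rfl, rfl⟩ := applyList_eq_app (by trivial) heq
      obtain ⟨lhs₀, q, hq, hl0⟩ := eq_concat_of_length r.lhs es₀.length (by simp at hlen; omega)
      rw [hq, List.map_append] at ds
      obtain ⟨B₀, B₁⟩ := (zip_forall_append (by simp; omega)).1 ds
      have hlhs : ∀ v ∈ r.lhs, IsPPat v := fun v hv => (((hP r hr).1).2.1 v hv).1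
      have hq' : IsPPat (subst θ q) :=
        (hlhs q (by rw [hq]; simp)).substPPat hθ
      refine ⟨subst θ q, hq', B₁ (u, subst θ q) (zip_single_mem u (subst θ q)), ?_⟩
      have hg : Exp.app (applyList (Exp.fn r.fn) es₀) (subst θ q)
          = applyList (Exp.fn r.fn) ((es₀ ++ [subst θ q]) ++ []) := by
        rw [List.append_nil, applyList_concat]
      rw [hg]
      refine .opr r hr θ hθ (es₀ ++ [subst θ q]) [] t' (by simp at hlen ⊢; omega) ?_ d
      rw [hq, List.map_append]
      exact (zip_forall_append (by simp; omega)).2 ⟨B₀, forall_zip_single hq'.derSelf⟩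
    · simp only [List.concat_eq_append] at d ihd heq
      rw [show es ++ (as₀ ++ [a'']) = (es ++ as₀) ++ [a''] from (List.append_assoc ..).symm,
        applyList_concat] at heq
      injection heq with h1 h2
      subst h2; subst h1
      obtain ⟨t, hpt, hd1, hd2⟩ := ihd (applyList (subst θ r.rhs) as₀) a'' (applyList_concat _ _ _)
      refine ⟨t, hpt, hd1, ?_⟩
      rw [← applyList_concat] at hd2
      have hg : Exp.app (applyList (Exp.fn r.fn) (es ++ as₀)) t
          = applyList (Exp.fn r.fn) (es ++ (as₀ ++ [t])) := by
        rw [← List.append_assoc, applyList_concat]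
      rw [hg]
      exact .opr r hr θ hθ es (as₀ ++ [t]) t' hlen ds hd2

/-! #### Putting everything together -/

theorem der_ctx_sub (hP : WFProg P) (C : Cntxt σ) :
    ∀ {e s : Exp σ}, Der P (C.fill e) s → IsPPat s →
      ∃ t, IsPPat t ∧ Der P e t ∧ Der P (C.fill t) s := by
  induction C with
  | hole => exact fun hD hs => ⟨_, hs, hD, hs.derSelf⟩
  | appL C' a ih =>
    intro e s hD _
    obtain ⟨p, hp, h1, h2⟩ := der_app_left hP hD (C'.fill e) a rfl
    obtain ⟨t, ht, h3, h4⟩ := ih h1 hp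
    exact ⟨t, ht, h3, der_trans hP h4 hp [a] s h2⟩
  | appR a C' ih =>
    intro e s hD _
    obtain ⟨p, hp, h1, h2⟩ := der_app_right hP hD a (C'.fill e) rfl
    obtain ⟨t, ht, h3, h4⟩ := ih h1 hp
    exact ⟨t, ht, h3, der_arg hP hp h4 h2 a rfl⟩

theorem der_ctx_mono (hP : WFProg P) (C : Cntxt σ) {e t : Exp σ} (ht : IsPPat t)
    (he : Der P e t) : ∀ {s : Exp σ}, Der P (C.fill t) s → Der P (C.fill e) s := by
  induction C with
  | hole => exact fun hD => der_trans hP he ht [] _ hD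
  | appL C' a ih =>
    intro s hD
    obtain ⟨p, hp, h1, h2⟩ := der_app_left hP hD (C'.fill t) a rfl
    exact der_trans hP (ih h1) hp [a] s h2
  | appR a C' ih =>
    intro s hD
    obtain ⟨p, hp, h1, h2⟩ := der_app_right hP hD a (C'.fill t) rfl
    exact der_arg hP hp (ih h1) h2 a rfl

end CompositionalityAux

/-- **Compositionality of HOCRWL semantics** (Theorem 1): for any program `P`
without extra variables, any partial expression `e` and any context `C`,
`⟦C[e]⟧ = ⋃_{t ∈ ⟦e⟧} ⟦C[t]⟧`. -/
theorem hocrwl_compositionality (σ : Sig) (P : Program σ) (hP : WFProg P)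
    (e : Exp σ) (C : Cntxt σ) :
    den P (C.fill e) = ⋃ t ∈ den P e, den P (C.fill t) := by
  ext s
  constructor
  · rintro ⟨hs, hD⟩
    rw [deriv_iff] at hD
    obtain ⟨t, ht, h1, h2⟩ := der_ctx_sub hP C hD hs
    exact Set.mem_biUnion (show t ∈ den P e from ⟨ht, h1.toDeriv⟩) ⟨hs, h2.toDeriv⟩
  · intro hs'
    obtain ⟨t, htden, hstden⟩ := Set.mem_iUnion₂.1 hs'
    obtain ⟨ht, hder⟩ := htden
    obtain ⟨hs, hD⟩ := hstden
    exact ⟨hs, (der_ctx_mono hP C ht (deriv_iff.1 hder) (deriv_iff.1 hD)).toDeriv⟩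
end

section
/- Two partial expressions e and e' are n-extensionally equivalent if and only if ⟦e t1…tn⟧ = ⟦e' t1…tn⟧ for all partial patterns t1,…,tn; i.e. it suffices to test n-extensional equivalence on partial-pattern arguments. -/
variable {σ : Sig}

namespace HOCRWLAux

/-! ### List utilities -/

theorem append_split {α} {a b c d : List α} (h : a ++ b = c ++ d)
    (hle : b.length ≤ d.length) : ∃ m, a = c ++ m ∧ d = m ++ b := by
  have hlen : a.length + b.length = c.length + d.length := by
    have := congrArg List.length h; simpa using this
  have hca : c.length ≤ a.length := by omega
  refine ⟨a.drop c.length, ?_, ?_⟩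
  · have h1 : (a ++ b).take c.length = a.take c.length :=
      List.take_append_of_le_length hca
    have h2 : (c ++ d).take c.length = c := by
      simpa using List.take_append_of_le_length (le_refl c.length)
    have hac : a.take c.length = c := by rw [← h1, h, h2]
    conv_lhs => rw [← List.take_append_drop c.length a]
    rw [hac]
  · have h1 : (a ++ b).drop c.length = a.drop c.length ++ b :=
      List.drop_append_of_le_length hca
    have h2 : (c ++ d).drop c.length = d := by
      simpa using List.drop_append_of_le_length (le_refl c.length)
    rw [← h2, ← h, h1]

theorem forall_zip_iff {α : Type _} {l1 l2 : List α} (h : l1.length = l2.length)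
    {Q : α → α → Prop} :
    (∀ p ∈ l1.zip l2, Q p.1 p.2) ↔
      ∀ (i : ℕ) (hi : i < l1.length), Q (l1[i]'hi) (l2[i]'(h ▸ hi)) := by
  constructor
  · intro H i hi
    have hz : i < (l1.zip l2).length := by simp [List.length_zip]; omega
    have hm : (l1.zip l2)[i]'hz ∈ l1.zip l2 := List.getElem_mem hz
    have := H _ hm
    rwa [List.getElem_zip] at this
  · intro H p hp
    obtain ⟨i, hi, hpe⟩ := List.mem_iff_getElem.1 hp
    have hi1 : i < l1.length := by simp [List.length_zip] at hi; omega
    rw [List.getElem_zip] at hpe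
    subst hpe
    exact H i hi1

theorem mem_zip_self {α : Type _} {l : List α} {p : α × α} (hp : p ∈ l.zip l) :
    p.1 = p.2 ∧ p.1 ∈ l := by
  obtain ⟨i, hi, hpe⟩ := List.mem_iff_getElem.1 hp
  rw [List.getElem_zip] at hpe
  subst hpe
  exact ⟨rfl, List.getElem_mem _⟩

end HOCRWLAux

namespace HOCRWLAux
variable {σ : Sig}

/-! ### Spine decomposition -/

theorem applyList_nil (e : Exp σ) : applyList e [] = e := rfl

theorem applyList_cons (e x : Exp σ) (l : List (Exp σ)) :
    applyList e (x :: l) = applyList (Exp.app e x) l := rfl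

theorem applyList_append (e : Exp σ) (l1 l2 : List (Exp σ)) :
    applyList e (l1 ++ l2) = applyList (applyList e l1) l2 :=
  List.foldl_append ..

theorem applyList_concat (e x : Exp σ) (l : List (Exp σ)) :
    applyList e (l ++ [x]) = Exp.app (applyList e l) x := by
  rw [applyList_append]; rfl

def sHead : Exp σ → Exp σ
  | .app a _ => sHead a
  | e => e

def sArgs : Exp σ → List (Exp σ)
  | .app a b => sArgs a ++ [b]
  | _ => []

@[simp] theorem sHead_app (a b : Exp σ) : sHead (Exp.app a b) = sHead a := rfl
@[simp] theorem sArgs_app (a b : Exp σ) : sArgs (Exp.app a b) = sArgs a ++ [b] := rfl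
@[simp] theorem sHead_var (x : ℕ) : sHead (Exp.var x : Exp σ) = Exp.var x := rfl
@[simp] theorem sHead_fn (f : σ.FS) : sHead (Exp.fn f) = Exp.fn f := rfl
@[simp] theorem sHead_cn (c : σ.CS) : sHead (Exp.cn c) = Exp.cn c := rfl
@[simp] theorem sHead_bot : sHead (Exp.bot : Exp σ) = Exp.bot := rfl
@[simp] theorem sArgs_var (x : ℕ) : sArgs (Exp.var x : Exp σ) = [] := rfl
@[simp] theorem sArgs_fn (f : σ.FS) : sArgs (Exp.fn f : Exp σ) = [] := rfl
@[simp] theorem sArgs_cn (c : σ.CS) : sArgs (Exp.cn c : Exp σ) = [] := rfl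
@[simp] theorem sArgs_bot : sArgs (Exp.bot : Exp σ) = [] := rfl

theorem sHead_applyList (e : Exp σ) (l : List (Exp σ)) :
    sHead (applyList e l) = sHead e := by
  induction l generalizing e with
  | nil => rfl
  | cons x l ih => rw [applyList_cons, ih]; rfl

theorem sArgs_applyList (e : Exp σ) (l : List (Exp σ)) :
    sArgs (applyList e l) = sArgs e ++ l := by
  induction l generalizing e with
  | nil => simp [applyList_nil]
  | cons x l ih => rw [applyList_cons, ih]; simp

theorem applyList_sHead_sArgs (e : Exp σ) : applyList (sHead e) (sArgs e) = e := by
  induction e with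
  | app a b iha ihb => rw [sHead_app, sArgs_app, applyList_concat, iha]
  | _ => rfl

theorem symb_sHead {h : Exp σ} (hs : IsSymb h) : sHead h = h := by
  cases h <;> first | rfl | exact absurd hs (by simp [IsSymb])

theorem symb_sArgs {h : Exp σ} (hs : IsSymb h) : sArgs h = [] := by
  cases h <;> first | rfl | exact absurd hs (by simp [IsSymb])

/-- Key decomposition: if `e e1…ek = h l1…lm` with `h` a symbol, then
`e = h` applied to its spine args and `l = sArgs e ++ es`. -/
theorem eq_applyList_symb {h : Exp σ} (hs : IsSymb h) {e : Exp σ}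
    {es l : List (Exp σ)} (heq : applyList e es = applyList h l) :
    e = applyList h (sArgs e) ∧ l = sArgs e ++ es := by
  have hh : sHead e = h := by
    have := congrArg sHead heq
    rwa [sHead_applyList, sHead_applyList, symb_sHead hs] at this
  have ha : sArgs e ++ es = l := by
    have := congrArg sArgs heq
    rwa [sArgs_applyList, sArgs_applyList, symb_sArgs hs, List.nil_append] at this
  exact ⟨by rw [← hh, applyList_sHead_sArgs], ha.symm⟩

end HOCRWLAux

namespace HOCRWLAux
variable {σ : Sig}

/-! ### Partial pattern facts -/

theorem isPPat_iff (p : Exp σ) :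
    IsPPat p ↔ (∃ x, p = Exp.var x) ∨ p = Exp.bot ∨
      (∃ c, sHead p = Exp.cn c ∧ (sArgs p).length ≤ σ.arityC c ∧
        ∀ t ∈ sArgs p, IsPPat t) ∨
      (∃ f, sHead p = Exp.fn f ∧ (sArgs p).length < σ.arityF f ∧
        ∀ t ∈ sArgs p, IsPPat t) := by
  constructor
  · intro hp
    induction hp with
    | var x => exact Or.inl ⟨x, rfl⟩
    | bot => exact Or.inr (Or.inl rfl)
    | capp c ts har hts _ =>
      exact Or.inr (Or.inr (Or.inl ⟨c, by simp [sHead_applyList],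
        by simp [sArgs_applyList, har], by simpa [sArgs_applyList] using hts⟩))
    | fapp f ts har hts _ =>
      exact Or.inr (Or.inr (Or.inr ⟨f, by simp [sHead_applyList],
        by simp [sArgs_applyList, har], by simpa [sArgs_applyList] using hts⟩))
  · rintro (⟨x, rfl⟩ | rfl | ⟨c, hh, hle, hts⟩ | ⟨f, hh, hlt, hts⟩)
    · exact IsPPat.var x
    · exact IsPPat.bot
    · have := IsPPat.capp c (sArgs p) hle hts
      rwa [← hh, applyList_sHead_sArgs] at this
    · have := IsPPat.fapp f (sArgs p) hlt hts
      rwa [← hh, applyList_sHead_sArgs] at this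

theorem ppat_sArgs {p : Exp σ} (hp : IsPPat p) : ∀ t ∈ sArgs p, IsPPat t := by
  rcases (isPPat_iff p).1 hp with ⟨x, rfl⟩ | rfl | ⟨c, _, _, hts⟩ | ⟨f, _, _, hts⟩ <;>
    simp_all

theorem ppat_app {a b : Exp σ} (hp : IsPPat (Exp.app a b)) : IsPPat a ∧ IsPPat b := by
  rcases (isPPat_iff _).1 hp with ⟨x, hx⟩ | hb | ⟨c, hh, hle, hts⟩ | ⟨f, hh, hlt, hts⟩
  · exact absurd hx (by simp)
  · exact absurd hb (by simp)
  · refine ⟨(isPPat_iff a).2 (Or.inr (Or.inr (Or.inl ⟨c, ?_, ?_, ?_⟩))), ?_⟩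
    · simpa using hh
    · simp at hle; omega
    · intro t ht; exact hts t (by simp [ht])
    · exact hts b (by simp)
  · refine ⟨(isPPat_iff a).2 (Or.inr (Or.inr (Or.inr ⟨f, ?_, ?_, ?_⟩))), ?_⟩
    · simpa using hh
    · simp at hlt; omega
    · intro t ht; exact hts t (by simp [ht])
    · exact hts b (by simp)

theorem ppat_fn_len {p : Exp σ} (hp : IsPPat p) {f : σ.FS} (hh : sHead p = Exp.fn f) :
    (sArgs p).length < σ.arityF f := by
  rcases (isPPat_iff p).1 hp with ⟨x, rfl⟩ | rfl | ⟨c, hc, _, _⟩ | ⟨f', hf, hlt, _⟩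
  · simp at hh
  · simp at hh
  · rw [hc] at hh; cases hh
  · rw [hf] at hh; cases hh; exact hlt

/-- Applying a partial-pattern substitution to a partial pattern yields
a partial pattern. -/
theorem subst_applyList (θ : ℕ → Exp σ) (e : Exp σ) (l : List (Exp σ)) :
    subst θ (applyList e l) = applyList (subst θ e) (l.map (subst θ)) := by
  induction l generalizing e with
  | nil => rfl
  | cons x l ih => rw [applyList_cons, ih]; rfl

theorem ppat_subst {θ : ℕ → Exp σ} (hθ : PSub θ) {p : Exp σ} (hp : IsPPat p) :
    IsPPat (subst θ p) := by
  induction hp with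
  | var x => exact hθ x
  | bot => exact IsPPat.bot
  | capp c ts har hts ih =>
    rw [subst_applyList]
    exact IsPPat.capp c _ (by simpa using har) (by simpa using ih)
  | fapp f ts har hts ih =>
    rw [subst_applyList]
    exact IsPPat.fapp f _ (by simpa using har) (by simpa using ih)

end HOCRWLAux

namespace HOCRWLAux
variable {σ : Sig}

/-! ### The approximation ordering -/

inductive Approx : Exp σ → Exp σ → Prop where
  | bot (e : Exp σ) : Approx Exp.bot e
  | var (x : ℕ) : Approx (Exp.var x) (Exp.var x)
  | fn (f : σ.FS) : Approx (Exp.fn f) (Exp.fn f)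
  | cn (c : σ.CS) : Approx (Exp.cn c) (Exp.cn c)
  | app {a a' b b' : Exp σ} (ha : Approx a a') (hb : Approx b b') :
      Approx (Exp.app a b) (Exp.app a' b')

theorem approx_refl (e : Exp σ) : Approx e e := by
  induction e with
  | app a b iha ihb => exact Approx.app iha ihb
  | var x => exact Approx.var x
  | fn f => exact Approx.fn f
  | cn c => exact Approx.cn c
  | bot => exact Approx.bot _

theorem approx_bot_inv {t : Exp σ} (h : Approx t Exp.bot) : t = Exp.bot := by
  cases h; rfl

theorem approx_var_inv {t : Exp σ} {x : ℕ} (h : Approx t (Exp.var x)) :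
    t = Exp.bot ∨ t = Exp.var x := by
  cases h
  · exact Or.inl rfl
  · exact Or.inr rfl

theorem approx_applyList_cong {a a' : Exp σ} (h : Approx a a') {l l' : List (Exp σ)}
    (hlen : l.length = l'.length) (hp : ∀ p ∈ l.zip l', Approx p.1 p.2) :
    Approx (applyList a l) (applyList a' l') := by
  induction l generalizing a a' l' with
  | nil =>
    cases l' with
    | nil => exact h
    | cons _ _ => simp at hlen
  | cons x l ih =>
    cases l' with
    | nil => simp at hlen
    | cons y l' =>
      rw [applyList_cons, applyList_cons]
      refine ih (Approx.app h (hp (x, y) (by simp))) (by simpa using hlen) ?_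
      intro p hpm
      exact hp p (by simp [hpm])

theorem approx_symb_refl {h : Exp σ} (hs : IsSymb h) : Approx h h := approx_refl h

-- Inversion of approximation against a symbol application, for partial patterns.
theorem approx_applyList_inv {h : Exp σ} (hs : IsSymb h) {ts : List (Exp σ)}
    {t' : Exp σ} (hp' : IsPPat t') (ha : Approx t' (applyList h ts)) :
    t' = Exp.bot ∨ ∃ ts', t' = applyList h ts' ∧ ts'.length = ts.length ∧
      ∀ p ∈ ts'.zip ts, Approx p.1 p.2 := by
  induction ts using List.reverseRecOn generalizing t' with
  | nil =>
    rw [applyList_nil] at ha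
    cases h with
    | var x => exact absurd hs (by simp [IsSymb])
    | app a b => exact absurd hs (by simp [IsSymb])
    | fn f =>
      cases ha
      · exact Or.inl rfl
      · exact Or.inr ⟨[], rfl, rfl, by simp⟩
    | cn c =>
      cases ha
      · exact Or.inl rfl
      · exact Or.inr ⟨[], rfl, rfl, by simp⟩
    | bot => exact Or.inl (approx_bot_inv ha)
  | append_singleton ts x ih =>
    rw [applyList_concat] at ha
    cases ha with
    | bot => exact Or.inl rfl
    | app haa hab =>
      rename_i a b
      obtain ⟨hpa, hpb⟩ := ppat_app hp'
      rcases ih hpa haa with rfl | ⟨ts', rfl, hlen, hppr⟩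
      · -- t' = app ⊥ b is not a partial pattern
        exfalso
        rcases (isPPat_iff (Exp.app Exp.bot b)).1 hp' with ⟨y, hy⟩ | hb0 |
          ⟨c, hh, _, _⟩ | ⟨f, hh, _, _⟩
        · exact absurd hy (by simp)
        · exact absurd hb0 (by simp)
        · simp at hh
        · simp at hh
      · refine Or.inr ⟨ts' ++ [b], by rw [applyList_concat], by simp [hlen], ?_⟩
        intro p hpm
        rw [List.zip_append (by omega)] at hpm
        rcases List.mem_append.1 hpm with hm | hm
        · exact hppr p hm
        · simp at hm
          subst hm
          exact hab

end HOCRWLAux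

namespace HOCRWLAux
variable {σ : Sig}

/-! ### Basic derivation lemmas -/

theorem symb_cn (c : σ.CS) : IsSymb (Exp.cn c : Exp σ) := by simp [IsSymb]
theorem symb_fn (f : σ.FS) : IsSymb (Exp.fn f : Exp σ) := by simp [IsSymb]

theorem getElem_mem_zip {α : Type _} {l1 l2 : List α} {i : ℕ}
    (h1 : i < l1.length) (h2 : i < l2.length) :
    ((l1[i]'h1), (l2[i]'h2)) ∈ l1.zip l2 := by
  have hz : i < (l1.zip l2).length := by simp [List.length_zip]; omega
  have hg := List.getElem_mem hz
  rwa [List.getElem_zip] at hg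

/-- Every partial pattern derives itself. -/
theorem deriv_self (P : Program σ) {t : Exp σ} (hp : IsPPat t) : Deriv P t t := by
  induction hp with
  | var x => exact ⟨DTree.rr x⟩
  | bot => exact ⟨DTree.bot _⟩
  | capp c ts har hts ih =>
    refine ⟨DTree.dc (Exp.cn c) ts ts (symb_cn c) rfl (IsPPat.capp c ts har hts) ?_⟩
    rintro ⟨a, b⟩ hpm
    obtain ⟨heq, hmem⟩ := mem_zip_self hpm
    simp only at heq hmem
    subst heq
    exact (ih a hmem).some
  | fapp f ts har hts ih =>
    refine ⟨DTree.dc (Exp.fn f) ts ts (symb_fn f) rfl (IsPPat.fapp f ts har hts) ?_⟩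
    rintro ⟨a, b⟩ hpm
    obtain ⟨heq, hmem⟩ := mem_zip_self hpm
    simp only at heq hmem
    subst heq
    exact (ih a hmem).some

/-- If `t` is a partial pattern and `P ⊢ t ⇒ t'`, then `t'` approximates `t`. -/
theorem approx_of_deriv {P : Program σ} (hP : WFProg P) {t t' : Exp σ}
    (d : DTree P t t') : IsPPat t → Approx t' t := by
  induction d with
  | bot e => intro _; exact Approx.bot e
  | rr x => intro _; exact approx_refl _
  | dc h es ts hsym hlen hpat ds ih =>
    intro hp
    have hes : ∀ x ∈ es, IsPPat x := by
      have := ppat_sArgs hp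
      rw [sArgs_applyList, symb_sArgs hsym] at this
      simpa using this
    refine approx_applyList_cong (approx_refl h) hlen.symm ?_
    rw [forall_zip_iff hlen.symm]
    intro i hi
    have hi' : i < es.length := by omega
    exact ih _ (getElem_mem_zip hi' (by omega)) (hes _ (List.getElem_mem hi'))
  | opr r hr θ hθ es as t hlen ds d ih =>
    intro hp
    exfalso
    have hh : sHead (applyList (Exp.fn r.fn) (es ++ as)) = Exp.fn r.fn := by
      rw [sHead_applyList]; rfl
    have hlt := ppat_fn_len hp hh
    rw [sArgs_applyList, sArgs_fn, List.nil_append, List.length_append] at hlt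
    have harr := (hP r hr).1.1
    omega

end HOCRWLAux

namespace HOCRWLAux
variable {σ : Sig}

/-- If `P ⊢ e ⇒ t` and the partial pattern `t'` approximates `t`,
then `P ⊢ e ⇒ t'`. -/
theorem deriv_of_approx {P : Program σ} {e t : Exp σ} (d : DTree P e t) :
    ∀ t', IsPPat t' → Approx t' t → Deriv P e t' := by
  induction d with
  | bot e =>
    intro t' _ ha
    rw [approx_bot_inv ha]
    exact ⟨DTree.bot e⟩
  | rr x =>
    intro t' _ ha
    rcases approx_var_inv ha with rfl | rfl
    · exact ⟨DTree.bot _⟩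
    · exact ⟨DTree.rr x⟩
  | dc h es ts hsym hlen hpat ds ih =>
    intro t' hp' ha
    rcases approx_applyList_inv hsym hp' ha with rfl | ⟨ts', rfl, hlen', hpr⟩
    · exact ⟨DTree.bot _⟩
    · have hts' : ∀ x ∈ ts', IsPPat x := by
        have := ppat_sArgs hp'
        rw [sArgs_applyList, symb_sArgs hsym] at this
        simpa using this
      have H : ∀ p ∈ es.zip ts', Deriv P p.1 p.2 := by
        rw [forall_zip_iff (by omega)]
        intro i hi
        exact ih _ (getElem_mem_zip hi (by omega)) _
          (hts' _ (List.getElem_mem (by omega)))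
          ((forall_zip_iff hlen').1 hpr i (by omega))
      exact ⟨DTree.dc h es ts' hsym (by omega) hp' (fun p hp => (H p hp).some)⟩
  | opr r hr θ hθ es as t hlen ds d ihds ihd =>
    intro t' hp' ha
    exact ⟨DTree.opr r hr θ hθ es as t' hlen ds (ihd t' hp' ha).some⟩

end HOCRWLAux

namespace HOCRWLAux
variable {σ : Sig}

/-- **Decomposition**: a derivation of `e e1…en ⇒ t` factors through partial
patterns `t1,…,tn` with `ei ⇒ ti` and `e t1…tn ⇒ t`. -/
theorem deriv_decomp {P : Program σ} (hP : WFProg P) {E t : Exp σ} (d : DTree P E t) :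
    ∀ e es, E = applyList e es →
      ∃ ts : List (Exp σ), ts.length = es.length ∧
        (∀ p ∈ es.zip ts, IsPPat p.2 ∧ Deriv P p.1 p.2) ∧
        Deriv P (applyList e ts) t := by
  induction d with
  | bot E =>
    intro e es heq
    refine ⟨es.map (fun _ => Exp.bot), by simp, ?_, ⟨DTree.bot _⟩⟩
    intro p hp
    obtain ⟨i, hi, hpe⟩ := List.mem_iff_getElem.1 hp
    rw [List.getElem_zip] at hpe
    subst hpe
    simp only [List.getElem_map]
    exact ⟨IsPPat.bot, ⟨DTree.bot _⟩⟩
  | rr x =>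
    intro e es heq
    have h1 := congrArg sArgs heq
    rw [sArgs_var, sArgs_applyList] at h1
    obtain ⟨h2, h3⟩ := List.append_eq_nil_iff.1 h1.symm
    subst h3
    refine ⟨[], rfl, by simp, ?_⟩
    have he2 : e = Exp.var x := heq.symm
    show Deriv P (applyList e []) (Exp.var x)
    rw [applyList_nil, he2]
    exact ⟨DTree.rr x⟩
  | dc h es₀ ts₀ hsym hlen hpat ds ih =>
    intro e es heq
    obtain ⟨he, hl⟩ := eq_applyList_symb hsym heq.symm
    set pre := sArgs e with hpre
    have hlen0 : ts₀.length = pre.length + es.length := by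
      rw [← hlen, hl]; simp
    set tpre := ts₀.take pre.length with htpre
    set tsuf := ts₀.drop pre.length with htsuf
    have hts0 : ts₀ = tpre ++ tsuf := (List.take_append_drop _ _).symm
    have hlpre : tpre.length = pre.length := by
      rw [htpre, List.length_take]; omega
    have hlsuf : tsuf.length = es.length := by
      rw [htsuf, List.length_drop]; omega
    have hppat0 : ∀ x ∈ ts₀, IsPPat x := by
      have := ppat_sArgs hpat
      rw [sArgs_applyList, symb_sArgs hsym] at this
      simpa using this
    have hzip : es₀.zip ts₀ = pre.zip tpre ++ es.zip tsuf := by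
      rw [hl, hts0, List.zip_append hlpre.symm]
    refine ⟨tsuf, hlsuf, ?_, ?_⟩
    · intro p hp
      have hm : p ∈ es₀.zip ts₀ := by
        rw [hzip]; exact List.mem_append_right _ hp
      exact ⟨hppat0 _ (List.of_mem_zip hm).2, ⟨ds p hm⟩⟩
    · rw [he, ← applyList_append]
      have hpat' : IsPPat (applyList h (tpre ++ tsuf)) := by rw [← hts0]; exact hpat
      have hds' : ∀ p ∈ (pre ++ tsuf).zip (tpre ++ tsuf), Deriv P p.1 p.2 := by
        intro p hp
        rw [List.zip_append hlpre.symm] at hp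
        rcases List.mem_append.1 hp with hm | hm
        · exact ⟨ds p (by rw [hzip]; exact List.mem_append_left _ (by
            rw [hl] at *; exact hm))⟩
        · obtain ⟨h1, h2⟩ := mem_zip_self hm
          rw [← h1]
          exact deriv_self P (hppat0 _ (by rw [hts0]; exact List.mem_append_right _ h2))
      have := DTree.dc (P := P) h (pre ++ tsuf) (tpre ++ tsuf) hsym
        (by simp [hlpre, hlsuf]) hpat' (fun p hp => (hds' p hp).some)
      rw [← hts0] at this
      exact ⟨this⟩
  | opr r hr θ hθ es₀ as t hlen ds d ihds ihd =>
    intro e es heq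
    obtain ⟨he, hl⟩ := eq_applyList_symb (symb_fn r.fn) heq.symm
    set pre := sArgs e with hpre
    by_cases hc : es.length ≤ as.length
    · obtain ⟨apre, hpre2, has⟩ := append_split hl.symm hc
      obtain ⟨ts, hts_len, hts_pw, htd⟩ := ihd (applyList (subst θ r.rhs) apre) es
        (by rw [has, applyList_append])
      refine ⟨ts, hts_len, hts_pw, ?_⟩
      rw [he, hpre2, ← applyList_append, List.append_assoc]
      exact ⟨DTree.opr r hr θ hθ es₀ (apre ++ ts) t hlen ds
        ((applyList_append (subst θ r.rhs) apre ts) ▸ htd.some)⟩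
    · push_neg at hc
      obtain ⟨mid, hes0, hes⟩ := append_split hl (le_of_lt hc)
      obtain ⟨tas, htas_len, htas_pw, htd⟩ := ihd (subst θ r.rhs) as rfl
      set lhsθ := r.lhs.map (subst θ) with hlhsθdef
      have hlhsθ : lhsθ.length = es₀.length := by
        rw [hlhsθdef, List.length_map, hlen]
      have hlen_es0 : es₀.length = pre.length + mid.length := by
        rw [hes0]; simp
      set lp := lhsθ.take pre.length with hlp
      set lm := lhsθ.drop pre.length with hlm
      have hsplit : lhsθ = lp ++ lm := (List.take_append_drop _ _).symm
      have hlplen : lp.length = pre.length := by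
        rw [hlp, List.length_take]; omega
      have hlmlen : lm.length = mid.length := by
        rw [hlm, List.length_drop]; omega
      have hlmppat : ∀ x ∈ lm, IsPPat x := by
        intro x hx
        have hx' : x ∈ lhsθ := by rw [hsplit]; exact List.mem_append_right _ hx
        rw [hlhsθdef] at hx'
        obtain ⟨y, hy, rfl⟩ := List.mem_map.1 hx'
        exact ppat_subst hθ ((hP r hr).1.2.1 y hy).1
      have hzip : es₀.zip lhsθ = pre.zip lp ++ mid.zip lm := by
        rw [hes0, hsplit, List.zip_append hlplen.symm]
      refine ⟨lm ++ tas, ?_, ?_, ?_⟩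
      · rw [hes]; simp [hlmlen, htas_len]
      · intro p hp
        rw [hes, List.zip_append hlmlen.symm] at hp
        rcases List.mem_append.1 hp with hm | hm
        · refine ⟨hlmppat _ (List.of_mem_zip hm).2, ⟨ds p ?_⟩⟩
          rw [hzip]
          exact List.mem_append_right _ hm
        · exact htas_pw p hm
      · rw [he, ← applyList_append, ← List.append_assoc, applyList_append]
        have hds' : ∀ p ∈ (pre ++ lm).zip lhsθ, Deriv P p.1 p.2 := by
          intro p hp
          rw [hsplit, List.zip_append hlplen.symm] at hp
          rcases List.mem_append.1 hp with hm | hm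
          · exact ⟨ds p (by rw [hzip]; exact List.mem_append_left _ hm)⟩
          · obtain ⟨h1, h2⟩ := mem_zip_self hm
            rw [← h1]
            exact deriv_self P (hlmppat _ h2)
        have := DTree.opr (P := P) r hr θ hθ (pre ++ lm) tas t
          (by simp [hlplen]; omega) (fun p hp => (hds' p hp).some) htd.some
        rw [applyList_append] at this
        exact ⟨this⟩

end HOCRWLAux

namespace HOCRWLAux
variable {σ : Sig}

/-- **Composition**: if `ei ⇒ ti` for partial patterns `ti` and
`e t1…tn ⇒ t`, then `e e1…en ⇒ t`. -/
theorem deriv_comp {P : Program σ} (hP : WFProg P) {E t : Exp σ} (d : DTree P E t) :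
    ∀ e ts es, E = applyList e ts → ts.length = es.length →
      (∀ p ∈ es.zip ts, IsPPat p.2 ∧ Deriv P p.1 p.2) →
      Deriv P (applyList e es) t := by
  induction d with
  | bot E =>
    intro e ts es _ _ _
    exact ⟨DTree.bot _⟩
  | rr x =>
    intro e ts es heq hlen hpw
    have h1 := congrArg sArgs heq
    rw [sArgs_var, sArgs_applyList] at h1
    obtain ⟨h2, h3⟩ := List.append_eq_nil_iff.1 h1.symm
    subst h3
    have h4 : es = [] := List.eq_nil_of_length_eq_zero (by simp at hlen; omega)
    subst h4
    have he2 : e = Exp.var x := heq.symm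
    show Deriv P (applyList e []) (Exp.var x)
    rw [applyList_nil, he2]
    exact ⟨DTree.rr x⟩
  | dc h es₀ ts₀ hsym hlen0 hpat ds ih =>
    intro e ts es heq hlen hpw
    obtain ⟨he, hl⟩ := eq_applyList_symb hsym heq.symm
    set pre := sArgs e with hpre
    have hlents : ts₀.length = pre.length + ts.length := by
      rw [← hlen0, hl]; simp
    set vpre := ts₀.take pre.length with hvpre
    set vsuf := ts₀.drop pre.length with hvsuf
    have hts0 : ts₀ = vpre ++ vsuf := (List.take_append_drop _ _).symm
    have hlvpre : vpre.length = pre.length := by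
      rw [hvpre, List.length_take]; omega
    have hlvsuf : vsuf.length = ts.length := by
      rw [hvsuf, List.length_drop]; omega
    have hppat0 : ∀ x ∈ ts₀, IsPPat x := by
      have := ppat_sArgs hpat
      rw [sArgs_applyList, symb_sArgs hsym] at this
      simpa using this
    have hzip : es₀.zip ts₀ = pre.zip vpre ++ ts.zip vsuf := by
      rw [hl, hts0, List.zip_append hlvpre.symm]
    -- derivations es_i ⇒ vsuf_i
    have hsuf : ∀ p ∈ es.zip vsuf, Deriv P p.1 p.2 := by
      rw [forall_zip_iff (by omega)]
      intro i hi
      have hm1 : ((es[i]'hi), (ts[i]'(by omega))) ∈ es.zip ts :=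
        getElem_mem_zip hi (by omega)
      have hm2 : ((ts[i]'(by omega)), (vsuf[i]'(by omega))) ∈ es₀.zip ts₀ := by
        rw [hzip]
        exact List.mem_append_right _ (getElem_mem_zip (by omega) (by omega))
      have ha : Approx (vsuf[i]'(by omega)) (ts[i]'(by omega)) :=
        approx_of_deriv hP (ds _ hm2) (hpw _ hm1).1
      exact deriv_of_approx (hpw _ hm1).2.some _
        (hppat0 _ (by have hmm := List.mem_append_right vpre (List.getElem_mem (l := vsuf) (n := i) (by omega)); rwa [← hts0] at hmm)) ha
    have hdall : ∀ p ∈ (pre ++ es).zip (vpre ++ vsuf), Deriv P p.1 p.2 := by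
      intro p hp
      rw [List.zip_append (by omega)] at hp
      rcases List.mem_append.1 hp with hm | hm
      · exact ⟨ds p (by rw [hzip]; exact List.mem_append_left _ hm)⟩
      · exact hsuf p hm
    have hpat' : IsPPat (applyList h (vpre ++ vsuf)) := by rw [← hts0]; exact hpat
    have := DTree.dc (P := P) h (pre ++ es) (vpre ++ vsuf) hsym
      (by simp; omega) hpat' (fun p hp => (hdall p hp).some)
    rw [← hts0] at this
    rw [he, ← applyList_append]
    exact ⟨this⟩
  | opr r hr θ hθ es₀ as t hlen0 ds d ihds ihd =>
    intro e ts es heq hlen hpw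
    obtain ⟨he, hl⟩ := eq_applyList_symb (symb_fn r.fn) heq.symm
    set pre := sArgs e with hpre
    by_cases hc : ts.length ≤ as.length
    · obtain ⟨apre, hpre2, has⟩ := append_split hl.symm hc
      have htd := ihd (applyList (subst θ r.rhs) apre) ts es
        (by rw [has, applyList_append]) hlen hpw
      rw [he, hpre2, ← applyList_append, List.append_assoc]
      exact ⟨DTree.opr r hr θ hθ es₀ (apre ++ es) t hlen0 ds
        ((applyList_append (subst θ r.rhs) apre es) ▸ htd.some)⟩
    · push_neg at hc
      obtain ⟨mid, hes0, hts⟩ := append_split hl (le_of_lt hc)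
      -- split es as em ++ ea
      set em := es.take mid.length with hem
      set ea := es.drop mid.length with hea
      have hesplit : es = em ++ ea := (List.take_append_drop _ _).symm
      have hlenes : es.length = mid.length + as.length := by
        rw [← hlen, hts]; simp
      have hemlen : em.length = mid.length := by
        rw [hem, List.length_take]; omega
      have healen : ea.length = as.length := by
        rw [hea, List.length_drop]; omega
      -- split lhsθ as lp ++ lm
      set lhsθ := r.lhs.map (subst θ) with hlhsθdef
      have hlhsθ : lhsθ.length = es₀.length := by
        rw [hlhsθdef, List.length_map, hlen0]
      have hlen_es0 : es₀.length = pre.length + mid.length := by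
        rw [hes0]; simp
      set lp := lhsθ.take pre.length with hlp
      set lm := lhsθ.drop pre.length with hlm
      have hsplit : lhsθ = lp ++ lm := (List.take_append_drop _ _).symm
      have hlplen : lp.length = pre.length := by
        rw [hlp, List.length_take]; omega
      have hlmlen : lm.length = mid.length := by
        rw [hlm, List.length_drop]; omega
      have hlmppat : ∀ x ∈ lm, IsPPat x := by
        intro x hx
        have hx' : x ∈ lhsθ := by rw [hsplit]; exact List.mem_append_right _ hx
        rw [hlhsθdef] at hx'
        obtain ⟨y, hy, rfl⟩ := List.mem_map.1 hx'
        exact ppat_subst hθ ((hP r hr).1.2.1 y hy).1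
      have hzip0 : es₀.zip lhsθ = pre.zip lp ++ mid.zip lm := by
        rw [hes0, hsplit, List.zip_append hlplen.symm]
      have hzipes : es.zip ts = em.zip mid ++ ea.zip as := by
        rw [hesplit, hts, List.zip_append hemlen]
      -- derivations em_i ⇒ lm_i
      have hdm : ∀ p ∈ em.zip lm, Deriv P p.1 p.2 := by
        rw [forall_zip_iff (by omega)]
        intro i hi
        have hm1 : ((em[i]'hi), (mid[i]'(by omega))) ∈ es.zip ts := by
          rw [hzipes]
          exact List.mem_append_left _ (getElem_mem_zip hi (by omega))
        have hm2 : ((mid[i]'(by omega)), (lm[i]'(by omega))) ∈ es₀.zip lhsθ := by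
          rw [hzip0]
          exact List.mem_append_right _ (getElem_mem_zip (by omega) (by omega))
        have ha : Approx (lm[i]'(by omega)) (mid[i]'(by omega)) :=
          approx_of_deriv hP (ds _ hm2) (hpw _ hm1).1
        exact deriv_of_approx (hpw _ hm1).2.some _
          (hlmppat _ (List.getElem_mem _)) ha
      -- derivation of the rhs applied to ea
      have htd := ihd (subst θ r.rhs) as ea rfl healen.symm (by
        intro p hp
        exact hpw p (by rw [hzipes]; exact List.mem_append_right _ hp))
      -- assemble
      have hds' : ∀ p ∈ (pre ++ em).zip lhsθ, Deriv P p.1 p.2 := by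
        intro p hp
        rw [hsplit, List.zip_append (by omega)] at hp
        rcases List.mem_append.1 hp with hm | hm
        · exact ⟨ds p (by rw [hzip0]; exact List.mem_append_left _ hm)⟩
        · exact hdm p hm
      have := DTree.opr (P := P) r hr θ hθ (pre ++ em) ea t
        (by simp [hemlen]; omega) (fun p hp => (hds' p hp).some) htd.some
      rw [applyList_append] at this
      rw [he, hesplit, ← applyList_append, ← List.append_assoc, applyList_append]
      exact ⟨this⟩

end HOCRWLAux

open HOCRWLAux

/-- **Proposition 1(ii)**: `e ∼ₙ e'` iff `⟦e t1…tn⟧ = ⟦e' t1…tn⟧` for all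
partial patterns `t1, …, tn`. -/
theorem extEquiv_iff_on_patterns (σ : Sig) (P : Program σ) (hP : WFProg P)
    (e e' : Exp σ) (n : ℕ) :
    ExtEquiv P n e e' ↔
      ∀ ts : List (Exp σ), ts.length = n → (∀ t ∈ ts, IsPPat t) →
        den P (applyList e ts) = den P (applyList e' ts) := by
  constructor
  · intro H ts hlen _
    exact H ts hlen
  · intro H es hlen
    have key : ∀ a b : Exp σ,
        (∀ ts : List (Exp σ), ts.length = n → (∀ t ∈ ts, IsPPat t) →
          den P (applyList a ts) = den P (applyList b ts)) →
        den P (applyList a es) ⊆ den P (applyList b es) := by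
      intro a b Hab t ht
      obtain ⟨hpt, ⟨d⟩⟩ := ht
      obtain ⟨ts, hts_len, hts_pw, htd⟩ := deriv_decomp hP d a es rfl
      have hts_ppat : ∀ x ∈ ts, IsPPat x := by
        intro x hx
        obtain ⟨i, hi, rfl⟩ := List.mem_iff_getElem.1 hx
        exact (hts_pw _ (getElem_mem_zip (by omega) hi)).1
      have hden := Hab ts (by omega) hts_ppat
      have ht2 : t ∈ den P (applyList a ts) := ⟨hpt, htd⟩
      rw [hden] at ht2
      obtain ⟨_, ⟨d2⟩⟩ := ht2
      exact ⟨hpt, deriv_comp hP d2 b ts es rfl hts_len hts_pw⟩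
    exact Set.Subset.antisymm (key e e' H)
      (key e' e (fun ts h1 h2 => (H ts h1 h2).symm))
end

section
/- Safe-extension invariance of HOCRWL denotations: if P' is a safe extension of (P, e) — i.e. P' = P ⊎ P'' where P'' contains no defining rule for any function symbol occurring in P or in e — and all programs are free of extra variables, then ⟦e⟧^P = ⟦e⟧^{P'}. -/
variable {σ : Sig}

lemma expFS_applyList_subset {S : Set σ.FS} {e : Exp σ} {es : List (Exp σ)} :
    expFS (applyList e es) ⊆ S ↔ expFS e ⊆ S ∧ ∀ a ∈ es, expFS a ⊆ S := by
  induction es generalizing e with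
  | nil => simp [applyList]
  | cons a es ih =>
    have : applyList e (a :: es) = applyList (Exp.app e a) es := rfl
    rw [this, ih]
    simp [expFS, Set.union_subset_iff]
    tauto

lemma expFS_subst_subset {θ : ℕ → Exp σ} {a : Exp σ} {S : Set σ.FS}
    (h1 : expFS a ⊆ S) (h2 : ∀ x ∈ occVars a, expFS (θ x) ⊆ S) :
    expFS (subst θ a) ⊆ S := by
  induction a with
  | var x => exact h2 x (by simp [occVars])
  | fn f => exact h1
  | cn c => exact h1
  | bot => exact h1
  | app b c ihb ihc =>
    simp only [subst, expFS, Set.union_subset_iff] at *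
    exact ⟨ihb h1.1 (fun x hx => h2 x (by simp [occVars, hx])),
      ihc h1.2 (fun x hx => h2 x (by simp [occVars, hx]))⟩

lemma expFS_theta_subset {θ : ℕ → Exp σ} {a : Exp σ} {x : ℕ}
    (hx : x ∈ occVars a) : expFS (θ x) ⊆ expFS (subst θ a) := by
  induction a with
  | var y => simp [occVars] at hx; subst hx; simp [subst]
  | fn f => simp [occVars] at hx
  | cn c => simp [occVars] at hx
  | bot => simp [occVars] at hx
  | app b c ihb ihc =>
    simp only [occVars, List.mem_append] at hx
    rcases hx with hx | hx
    · exact (ihb hx).trans (by simp [subst, expFS])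
    · exact (ihc hx).trans (by simp [subst, expFS])

lemma exists_mem_zip {α : Type} : ∀ (es ts : List α), es.length = ts.length →
    ∀ t ∈ ts, ∃ a, (a, t) ∈ es.zip ts := by
  intro es ts
  induction ts generalizing es with
  | nil => simp
  | cons t ts ih =>
    cases es with
    | nil => simp
    | cons a es =>
      intro hlen t' ht'
      rcases List.mem_cons.1 ht' with h | h
      · exact ⟨a, by simp [h]⟩
      · obtain ⟨b, hb⟩ := ih es (by simpa using hlen) t' h
        exact ⟨b, by simp [hb]⟩

lemma rhsFS_subset {P : Program σ} {r : Rule σ} (hr : r ∈ P) :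
    expFS r.rhs ⊆ progFS P := by
  intro f hf
  refine Set.mem_biUnion hr ?_
  simp [ruleFS]
  tauto

lemma dtree_mono {P P' : Program σ} (hPP : P ⊆ P') {e t : Exp σ}
    (d : DTree P e t) : Nonempty (DTree P' e t) := by
  induction d with
  | bot e => exact ⟨.bot e⟩
  | rr x => exact ⟨.rr x⟩
  | dc h es ts hsym hlen hpat ds ih =>
    exact ⟨.dc h es ts hsym hlen hpat (fun p hp => (ih p hp).some)⟩
  | opr r hr θ hθ es as t hlen ds d ih ihd =>
    exact ⟨.opr r (hPP hr) θ hθ es as t hlen (fun p hp => (ih p hp).some) ihd.some⟩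

lemma dtree_restrict {P P'' : Program σ} {S : Set σ.FS}
    (hdis : Disjoint S (defs P'')) (hPS : progFS P ⊆ S)
    (hWF : WFProg (P ∪ P'')) {e t : Exp σ} (d : DTree (P ∪ P'') e t) :
    expFS e ⊆ S → Nonempty (DTree P e t) ∧ expFS t ⊆ S := by
  induction d with
  | bot e => exact fun _ => ⟨⟨.bot e⟩, by simp [expFS]⟩
  | rr x => exact fun he => ⟨⟨.rr x⟩, he⟩
  | dc h es ts hsym hlen hpat ds ih =>
    intro he
    rw [expFS_applyList_subset] at he
    have hes : ∀ p ∈ es.zip ts, Nonempty (DTree P p.1 p.2) ∧ expFS p.2 ⊆ S :=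
      fun p hp => ih p hp (he.2 p.1 (List.of_mem_zip hp).1)
    refine ⟨⟨.dc h es ts hsym hlen hpat (fun p hp => (hes p hp).1.some)⟩, ?_⟩
    rw [expFS_applyList_subset]
    refine ⟨he.1, fun t' ht' => ?_⟩
    obtain ⟨a, ha⟩ := exists_mem_zip es ts hlen t' ht'
    exact (hes (a, t') ha).2
  | opr r hr θ hθ es as t hlen ds d ih ihd =>
    intro he
    rw [expFS_applyList_subset] at he
    have hfS : r.fn ∈ S := he.1 (by simp [expFS])
    have hrP : r ∈ P := by
      rcases hr with hr | hr
      · exact hr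
      · exact absurd (hdis.ne_of_mem hfS ⟨r, hr, rfl⟩) (by simp)
    have hes : ∀ p ∈ es.zip (r.lhs.map (subst θ)),
        Nonempty (DTree P p.1 p.2) ∧ expFS p.2 ⊆ S := fun p hp =>
      ih p hp (he.2 p.1 (by simp [List.mem_append, (List.of_mem_zip hp).1]))
    have hθS : ∀ x ∈ occVars r.rhs, expFS (θ x) ⊆ S := by
      intro x hx
      have hne : r.NoExtra := (hWF r (Or.inl hrP)).2
      obtain ⟨ti, hti, hxti⟩ := List.mem_flatMap.1 (hne x hx)
      obtain ⟨a, ha⟩ := exists_mem_zip es (r.lhs.map (subst θ))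
        (by simpa using hlen) (subst θ ti) (List.mem_map_of_mem hti)
      exact (expFS_theta_subset hxti).trans (hes (a, subst θ ti) ha).2
    have hrhs : expFS (subst θ r.rhs) ⊆ S :=
      expFS_subst_subset ((rhsFS_subset hrP).trans hPS) hθS
    have hbody : expFS (applyList (subst θ r.rhs) as) ⊆ S := by
      rw [expFS_applyList_subset]
      exact ⟨hrhs, fun a ha => he.2 a (by simp [List.mem_append, ha])⟩
    obtain ⟨⟨d'⟩, ht⟩ := ihd hbody
    exact ⟨⟨.opr r hrP θ hθ es as t hlen (fun p hp => (hes p hp).1.some) d'⟩, ht⟩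

/-- **Lemma 1 (safe-extension invariance)**: if `P'` safely extends `(P, e)`
and programs are free of extra variables, then `⟦e⟧^P = ⟦e⟧^{P'}`. -/
theorem den_safeExt (σ : Sig) (P P' : Program σ) (hP' : WFProg P')
    (e : Exp σ) (h : SafeExt P P' e) :
    den P e = den P' e := by
  obtain ⟨P'', rfl, _hdisj, hdef⟩ := h
  ext t
  constructor
  · rintro ⟨hp, ⟨d⟩⟩
    exact ⟨hp, dtree_mono Set.subset_union_left d⟩
  · rintro ⟨hp, ⟨d⟩⟩
    refine ⟨hp, (dtree_restrict (S := expFS e ∪ progFS P) hdef.symm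
      Set.subset_union_right hP' d ?_).1⟩
    exact Set.subset_union_left
end
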